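/- Let M > 0, B > 0, define r and R as in the binary beam-pointing capacity recursion (r 0 = M, r (j+1) = max (r j / 2) (r j - B), R j = 1 - (r (j-1)/M)(1 - H(min (1/2) (B / r (j-1))))). Then R j → 1 as j → ∞, and consequently the capacity C L = (1/L) ∑_{j=1}^L R j tends to 1 as L → ∞. -/

import Mathlib

noncomputable def binEnt (p : ℝ) : ℝ :=
  -p * Real.log p / Real.log 2 - (1 - p) * Real.log (1 - p) / Real.log 2

theorem stmt_12 (M B : ℝ) (hM : 0 < M) (hB : 0 < B)
    (r : ℕ → ℝ) (hr0 : r 0 = M)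
    (hr : ∀ j : ℕ, r (j + 1) = max (r j / 2) (r j - B))
    (R : ℕ → ℝ)
    (hR : ∀ j : ℕ, 1 ≤ j →
      R j = 1 - (r (j - 1) / M) * (1 - binEnt (min (1 / 2) (B / r (j - 1))))) :
    Filter.Tendsto R Filter.atTop (nhds 1) ∧
    Filter.Tendsto (fun L : ℕ => (1 / (L : ℝ)) * ∑ j ∈ Finset.Icc 1 L, R j)
      Filter.atTop (nhds 1) := by
  have hrpos : ∀ j, 0 < r j := by
    intro j
    induction j with
    | zero => rw [hr0]; exact hM
    | succ n ih => rw [hr n]; exact lt_max_of_lt_left (by linarith)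
  have hanti : Antitone r := by
    apply antitone_nat_of_succ_le
    intro n
    rw [hr n]
    exact max_le (by linarith [hrpos n]) (by linarith)
  have hbdd : BddBelow (Set.range r) := by
    refine ⟨0, ?_⟩
    rintro x ⟨j, rfl⟩
    exact (hrpos j).le
  have hlim : Filter.Tendsto r Filter.atTop (nhds (⨅ j, r j)) :=
    tendsto_atTop_ciInf hanti hbdd
  set l := ⨅ j, r j with hl
  have hl0 : 0 ≤ l := le_ciInf fun j => (hrpos j).le
  -- the limit satisfies l = max (l/2) (l - B)
  have hshift : Filter.Tendsto (fun j => r (j + 1)) Filter.atTop (nhds l) :=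
    hlim.comp (Filter.tendsto_add_atTop_nat 1)
  have hshift2 : Filter.Tendsto (fun j => max (r j / 2) (r j - B)) Filter.atTop
      (nhds (max (l / 2) (l - B))) :=
    (hlim.div_const 2).max (hlim.sub_const B)
  have heq : l = max (l / 2) (l - B) := by
    refine tendsto_nhds_unique ?_ hshift2
    simpa only [hr] using hshift
  have hlzero : l = 0 := by
    by_contra h
    have hlpos : 0 < l := lt_of_le_of_ne hl0 (Ne.symm h)
    have : max (l / 2) (l - B) < l := max_lt (by linarith) (by linarith)
    linarith [heq ▸ this]
  rw [hlzero] at hlim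
  have hrshift : Filter.Tendsto (fun j => r (j - 1)) Filter.atTop (nhds 0) :=
    hlim.comp (Filter.tendsto_sub_atTop_nat 1)
  -- bounds on R
  have hbounds : ∀ j : ℕ, 1 ≤ j → 1 - r (j - 1) / M ≤ R j ∧ R j ≤ 1 := by
    intro j hj
    set p := min (1 / 2 : ℝ) (B / r (j - 1)) with hp
    have hp0 : 0 ≤ p := le_min (by norm_num) (div_nonneg hB.le (hrpos _).le)
    have hp1 : p ≤ 1 := le_trans (min_le_left _ _) (by norm_num)
    have hbe : binEnt p = Real.binEntropy p / Real.log 2 := by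
      simp only [binEnt, Real.binEntropy, Real.log_inv]
      ring
    have hlog2 : 0 < Real.log 2 := Real.log_pos (by norm_num)
    have hbe0 : 0 ≤ binEnt p := by
      rw [hbe]
      exact div_nonneg (Real.binEntropy_nonneg hp0 hp1) hlog2.le
    have hbe1 : binEnt p ≤ 1 := by
      rw [hbe, div_le_one hlog2]
      exact Real.binEntropy_le_log_two
    have hrm : 0 ≤ r (j - 1) / M := div_nonneg (hrpos _).le hM.le
    rw [hR j hj]
    constructor
    · nlinarith
    · nlinarith
  have h1 : Filter.Tendsto R Filter.atTop (nhds 1) := by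
    have hlow : Filter.Tendsto (fun j => 1 - r (j - 1) / M) Filter.atTop (nhds 1) := by
      have := (hrshift.div_const M).const_sub 1
      simpa using this
    refine tendsto_of_tendsto_of_tendsto_of_le_of_le' hlow tendsto_const_nhds ?_ ?_
    · filter_upwards [Filter.eventually_ge_atTop 1] with j hj
      exact (hbounds j hj).1
    · filter_upwards [Filter.eventually_ge_atTop 1] with j hj
      exact (hbounds j hj).2
  refine ⟨h1, ?_⟩
  have hu : Filter.Tendsto (fun i => R (i + 1)) Filter.atTop (nhds 1) :=
    h1.comp (Filter.tendsto_add_atTop_nat 1)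
  have := hu.cesaro
  refine this.congr fun L => ?_
  rw [← Finset.Ico_add_one_right_eq_Icc, Finset.sum_Ico_eq_sum_range]
  simp only [one_div, Nat.succ_sub_one]
  congr 1
  apply Finset.sum_congr rfl
  intro i _
  rw [add_comm]
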